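/- Let T be a locally compact, second countable Hausdorff topological space, let σ be a Radon measure on T, and let λ : T → ℝ be continuous. Let F be the ℓ²-direct sum ℝ ⊕ ⨁_{n≥1} L²(T^n, σ^{⊗n}), with vacuum vector Ω = (1,0,0,…). Suppose x assigns to each continuous compactly supported function f : T → ℝ a bounded linear operator x(f) on F such that x(f)Ω = f (in the first summand) and, for every n ≥ 1 and g ∈ L²(T^n, σ^{⊗n}), x(f) maps the element g of the n-th summand to the sum of the function (t_0,…,t_n) ↦ f(t_0)g(t_1,…,t_n) in the (n+1)-st summand, the function (t_1,…,t_n) ↦ λ(t_1)f(t_1)g(t_1,…,t_n) in the n-th summand, and the function (t_2,…,t_n) ↦ ∫_T f(t)g(t,t_2,…,t_n) dσ(t) in the (n−1)-st summand. Then the vacuum Ω is cyclic for the family (x(f)): the closed linear span of {Ω} ∪ {x(f_1)⋯x(f_n)Ω : f_1,…,f_n continuous with compact support, n ≥ 1} equals F. -/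

import Mathlib

open MeasureTheory
open scoped ENNReal

/-- The `n`-fold product measure `σ^{⊗n}` on `Tⁿ = (Fin n → T)`. -/
noncomputable def fockMeas {T : Type*} [MeasurableSpace T] (σ : Measure T) (n : ℕ) :
    Measure (Fin n → T) :=
  Measure.pi fun _ => σ

/-- The `n`-th summand `L²(Tⁿ, σ^{⊗n})` of the full Fock space (for `n = 0` this is
`L²` of the one-point space `T⁰`, canonically `ℝ`). -/
noncomputable abbrev FockComp {T : Type*} [MeasurableSpace T] (σ : Measure T) (n : ℕ) :
    Type _ :=
  Lp ℝ 2 (fockMeas σ n)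

/-- The full Fock space over `L²(T, σ)`, realized as the `ℓ²`-direct sum
`ℝ ⊕ ⨁_{n≥1} L²(Tⁿ, σ^{⊗n})`. -/
noncomputable abbrev Fock {T : Type*} [MeasurableSpace T] (σ : Measure T) : Type _ :=
  lp (fun n : ℕ => FockComp σ n) 2

/-- The vacuum vector `Ω = (1, 0, 0, …)` of the full Fock space. -/
noncomputable def fockVacuum {T : Type*} [MeasurableSpace T] (σ : Measure T) : Fock σ :=
  lp.single 2 0 (indicatorConstLp 2 MeasurableSet.univ
    (by simp [fockMeas, Measure.pi_empty_univ]) (1 : ℝ))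

/-- The defining componentwise action of the free Gauss–Poisson field operator
`x(f) = a⁺(f) + a⁻(f) + a⁰(λf)` on the full Fock space: `x(f)Ω = f`, and on the `n`-th
summand (`n ≥ 1`) it acts by the sum of creation `(t₀,…,tₙ) ↦ f(t₀)g(t₁,…,tₙ)`, the
neutral part `(t₁,…,tₙ) ↦ λ(t₁)f(t₁)g(t₁,…,tₙ)` and annihilation
`(t₂,…,tₙ) ↦ ∫ f(t)g(t,t₂,…,tₙ) dσ(t)`. -/
def IsGPField {T : Type*} [MeasurableSpace T] (σ : Measure T) (lam : T → ℝ) (f : T → ℝ)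
    (A : Fock σ →L[ℝ] Fock σ) : Prop :=
  (∃ f1 : FockComp σ 1, (⇑f1 =ᵐ[fockMeas σ 1] fun x => f (x 0)) ∧
      A (fockVacuum σ) = lp.single 2 1 f1) ∧
  ∀ (m : ℕ) (g : FockComp σ (m + 1)),
    ∃ (gp : FockComp σ (m + 2)) (g0 : FockComp σ (m + 1)) (ga : FockComp σ m),
      (⇑gp =ᵐ[fockMeas σ (m + 2)] fun x => f (x 0) * g (fun j => x j.succ)) ∧
      (⇑g0 =ᵐ[fockMeas σ (m + 1)] fun x => lam (x 0) * f (x 0) * g x) ∧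
      (⇑ga =ᵐ[fockMeas σ m] fun y => ∫ t, f t * g (Fin.cons t y) ∂σ) ∧
      A (lp.single 2 (m + 1) g) =
        lp.single 2 (m + 2) gp + lp.single 2 (m + 1) g0 + lp.single 2 m ga

namespace Stmt11Aux

open Set

variable {T : Type*} [MeasurableSpace T] {σ : Measure T}

instance fockSF [SigmaFinite σ] (n : ℕ) : SigmaFinite (fockMeas σ n) := by
  unfold fockMeas; infer_instance

noncomputable abbrev fockEquiv (n : ℕ) : (Fin (n + 1) → T) ≃ᵐ (T × (Fin n → T)) :=
  MeasurableEquiv.piFinSuccAbove (fun _ => T) 0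

lemma fockEquiv_mp [SigmaFinite σ] (n : ℕ) :
    MeasurePreserving (fockEquiv n) (fockMeas σ (n + 1)) (σ.prod (fockMeas σ n)) :=
  measurePreserving_piFinSuccAbove (fun _ => σ) 0

/-- tensor of two functions as a function on `T^(n+1)`. -/
def tensFun (f : T → ℝ) (g : (Fin n → T) → ℝ) : (Fin (n + 1) → T) → ℝ :=
  fun x => f (x 0) * g (fun j => x j.succ)

lemma tensFun_eq_comp (f : T → ℝ) (g : (Fin n → T) → ℝ) :
    tensFun f g = (fun p : T × (Fin n → T) => f p.1 * g p.2) ∘ (fockEquiv n) := by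
  funext x
  have h2 : ((fockEquiv (T := T) n) x).2 = fun j => x j.succ := by
    funext j
    exact congrArg x (Fin.zero_succAbove j)
  simp only [Function.comp_apply, tensFun]
  rw [h2]
  rfl

lemma tensFun_congr [SigmaFinite σ] {n : ℕ} {f f' : T → ℝ} {g g' : (Fin n → T) → ℝ}
    (hf : f =ᵐ[σ] f') (hg : g =ᵐ[fockMeas σ n] g') :
    tensFun f g =ᵐ[fockMeas σ (n + 1)] tensFun f' g' := by
  have h1 : (fun p : T × (Fin n → T) => f p.1 * g p.2) =ᵐ[σ.prod (fockMeas σ n)]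
      (fun p => f' p.1 * g' p.2) :=
    ((Measure.quasiMeasurePreserving_fst).ae_eq_comp hf).mul
      ((Measure.quasiMeasurePreserving_snd).ae_eq_comp hg)
  have h2 := ((fockEquiv_mp (σ := σ) n).quasiMeasurePreserving).ae_eq h1
  rw [tensFun_eq_comp, tensFun_eq_comp]
  exact h2

lemma eLpNorm_mul_prod {α β : Type*} [MeasurableSpace α] [MeasurableSpace β]
    {μ : Measure α} {ν : Measure β} [SigmaFinite ν] {F : α → ℝ} {G : β → ℝ}
    (hF : AEStronglyMeasurable F μ) (hG : AEStronglyMeasurable G ν) :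
    eLpNorm (fun p : α × β => F p.1 * G p.2) 2 (μ.prod ν)
      = eLpNorm F 2 μ * eLpNorm G 2 ν := by
  have h2 : ((2 : ℝ≥0∞)).toReal = (2 : ℝ) := by norm_num
  rw [eLpNorm_eq_lintegral_rpow_enorm_toReal two_ne_zero ENNReal.ofNat_ne_top,
      eLpNorm_eq_lintegral_rpow_enorm_toReal two_ne_zero ENNReal.ofNat_ne_top,
      eLpNorm_eq_lintegral_rpow_enorm_toReal two_ne_zero ENNReal.ofNat_ne_top, h2]
  have hpt : ∀ p : α × β, (‖F p.1 * G p.2‖ₑ) ^ (2 : ℝ)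
      = (‖F p.1‖ₑ) ^ (2 : ℝ) * (‖G p.2‖ₑ) ^ (2 : ℝ) := by
    intro p
    rw [enorm_mul, ENNReal.mul_rpow_of_nonneg _ _ (by norm_num : (0:ℝ) ≤ 2)]
  rw [lintegral_congr hpt]
  rw [lintegral_prod_mul (hF.enorm.pow_const _) (hG.enorm.pow_const _)]
  rw [ENNReal.mul_rpow_of_nonneg _ _ (by norm_num : (0:ℝ) ≤ 1/2)]

lemma aesm_mul_prod {α β : Type*} [MeasurableSpace α] [MeasurableSpace β]
    {μ : Measure α} {ν : Measure β} [SFinite ν] {F : α → ℝ} {G : β → ℝ}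
    (hF : AEStronglyMeasurable F μ) (hG : AEStronglyMeasurable G ν) :
    AEStronglyMeasurable (fun p : α × β => F p.1 * G p.2) (μ.prod ν) :=
  (hF.comp_quasiMeasurePreserving Measure.quasiMeasurePreserving_fst).mul
    (hG.comp_quasiMeasurePreserving Measure.quasiMeasurePreserving_snd)

lemma memℒp_tens [SigmaFinite σ] {n : ℕ} (f : Lp ℝ 2 σ) (g : FockComp σ n) :
    MemLp (tensFun (⇑f) (⇑g)) 2 (fockMeas σ (n + 1)) := by
  have hψ : MemLp (fun p : T × (Fin n → T) => f p.1 * g p.2) 2 (σ.prod (fockMeas σ n)) := by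
    constructor
    · exact aesm_mul_prod (Lp.aestronglyMeasurable f) (Lp.aestronglyMeasurable g)
    · rw [eLpNorm_mul_prod (Lp.aestronglyMeasurable f) (Lp.aestronglyMeasurable g)]
      exact ENNReal.mul_lt_top (Lp.eLpNorm_lt_top f) (Lp.eLpNorm_lt_top g)
  rw [tensFun_eq_comp]
  exact hψ.comp_measurePreserving (fockEquiv_mp n)

/-- The tensor product `f ⊗ g` as an element of `L²(T^{n+1})`. -/
noncomputable def tens [SigmaFinite σ] {n : ℕ} (f : Lp ℝ 2 σ) (g : FockComp σ n) :
    FockComp σ (n + 1) :=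
  (memℒp_tens f g).toLp _

lemma tens_coeFn [SigmaFinite σ] {n : ℕ} (f : Lp ℝ 2 σ) (g : FockComp σ n) :
    ⇑(tens f g) =ᵐ[fockMeas σ (n + 1)] tensFun (⇑f) (⇑g) :=
  MemLp.coeFn_toLp _

lemma norm_tens [SigmaFinite σ] {n : ℕ} (f : Lp ℝ 2 σ) (g : FockComp σ n) :
    ‖tens f g‖ = ‖f‖ * ‖g‖ := by
  rw [Lp.norm_def, eLpNorm_congr_ae (tens_coeFn f g), tensFun_eq_comp,
    eLpNorm_comp_measurePreserving
      (aesm_mul_prod (Lp.aestronglyMeasurable f) (Lp.aestronglyMeasurable g)) (fockEquiv_mp n),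
    eLpNorm_mul_prod (Lp.aestronglyMeasurable f) (Lp.aestronglyMeasurable g),
    ENNReal.toReal_mul, Lp.norm_def, Lp.norm_def]

lemma tens_sub [SigmaFinite σ] {n : ℕ} (f f' : Lp ℝ 2 σ) (g : FockComp σ n) :
    tens (f - f') g = tens f g - tens f' g := by
  apply Lp.ext
  have h1 : ⇑(f - f') =ᵐ[σ] ⇑f - ⇑f' := Lp.coeFn_sub f f'
  have h2 : tensFun (⇑(f - f')) (⇑g) =ᵐ[fockMeas σ (n + 1)]
      tensFun (⇑f - ⇑f') (⇑g) := tensFun_congr h1 (Filter.EventuallyEq.rfl)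
  refine (tens_coeFn _ g).trans (h2.trans ?_)
  have h3 : tensFun (⇑f - ⇑f') (⇑g) = tensFun (⇑f) (⇑g) - tensFun (⇑f') (⇑g) := by
    funext x
    simp [tensFun, sub_mul]
  rw [h3]
  exact ((Lp.coeFn_sub (tens f g) (tens f' g)).trans
    (((tens_coeFn f g).sub (tens_coeFn f' g)))).symm


section Boxes

variable [SigmaFinite σ]

/-- Finite-measure measurable boxes in `Tⁿ`. -/
def boxes (σ : Measure T) [SigmaFinite σ] (n : ℕ) : Set (Set (Fin n → T)) :=
  {s : Set (Fin n → T) | ∃ A : Fin n → Set T,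
    (∀ i, MeasurableSet (A i)) ∧ (∀ i, σ (A i) < ⊤) ∧ s = Set.pi univ A}

lemma exists_spanning (n : ℕ) (x : Fin n → T) : ∃ k, ∀ i, x i ∈ spanningSets σ k := by
  have hx : ∀ i, ∃ k, x i ∈ spanningSets σ k := by
    intro i
    have : x i ∈ ⋃ k, spanningSets σ k := by
      rw [iUnion_spanningSets]; exact Set.mem_univ _
    exact Set.mem_iUnion.mp this
  choose K hK using hx
  exact ⟨Finset.univ.sup K, fun i =>
    monotone_spanningSets σ (Finset.le_sup (Finset.mem_univ i)) (hK i)⟩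

lemma isPiSystem_boxes (n : ℕ) : IsPiSystem (boxes σ n) := by
  rintro _ ⟨A, hA, hAf, rfl⟩ _ ⟨B, hB, hBf, rfl⟩ -
  refine ⟨fun i => A i ∩ B i, fun i => (hA i).inter (hB i),
    fun i => lt_of_le_of_lt (measure_mono Set.inter_subset_left) (hAf i), ?_⟩
  rw [← Set.pi_inter_distrib]

lemma generateFrom_boxes (n : ℕ) :
    (MeasurableSpace.pi : MeasurableSpace (Fin n → T)) =
      MeasurableSpace.generateFrom (boxes σ n) := by
  apply le_antisymm
  · rw [← generateFrom_pi]
    apply MeasurableSpace.generateFrom_le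
    rintro _ ⟨A, hA, rfl⟩
    have hbox : Set.pi univ A = ⋃ k, Set.pi univ (fun i => A i ∩ spanningSets σ k) := by
      ext x
      simp only [Set.mem_iUnion, Set.mem_univ_pi, Set.mem_inter_iff]
      constructor
      · intro hx
        obtain ⟨k, hk⟩ := exists_spanning (σ := σ) n x
        exact ⟨k, fun i => ⟨hx i, hk i⟩⟩
      · rintro ⟨k, hk⟩ i
        exact (hk i).1
    rw [hbox]
    refine MeasurableSet.iUnion fun k => MeasurableSpace.measurableSet_generateFrom ?_
    exact ⟨fun i => A i ∩ spanningSets σ k,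
      fun i => (hA i (Set.mem_univ i)).inter (measurableSet_spanningSets σ k),
      fun i => lt_of_le_of_lt (measure_mono Set.inter_subset_right)
        (measure_spanningSets_lt_top σ k), rfl⟩
  · apply MeasurableSpace.generateFrom_le
    rintro _ ⟨A, hA, _, rfl⟩
    exact MeasurableSet.univ_pi fun i => hA i

lemma iUnion_spanning_boxes (n : ℕ) :
    ⋃ k, Set.pi univ (fun _ : Fin n => spanningSets σ k) = (univ : Set (Fin n → T)) := by
  ext x
  simp only [Set.mem_iUnion, Set.mem_univ_pi, Set.mem_univ, iff_true]
  exact exists_spanning n x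

/-- If an `L²` function has vanishing integral on every finite-measure box, it is zero. -/
lemma eq_zero_of_forall_box (n : ℕ) (h : FockComp σ n)
    (hb : ∀ A : Fin n → Set T, (∀ i, MeasurableSet (A i)) → (∀ i, σ (A i) < ⊤) →
      ∫ x in Set.pi univ A, h x ∂(fockMeas σ n) = 0) : h = 0 := by
  set μ := fockMeas σ n with hμ
  set H : (Fin n → T) → ℝ := ⇑h with hH
  have Hm : Measurable H := (Lp.stronglyMeasurable h).measurable
  have hint : ∀ s : Set (Fin n → T), MeasurableSet s → μ s < ⊤ → IntegrableOn H s μ := by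
    intro s hs hsf
    have hmem : MemLp H 2 (μ.restrict s) := (Lp.memLp h).restrict s
    haveI : IsFiniteMeasure (μ.restrict s) := ⟨by rwa [Measure.restrict_apply_univ]⟩
    exact hmem.integrable one_le_two
  have hfin : ∀ s : Set (Fin n → T), MeasurableSet s → μ s < ⊤ →
      (∫⁻ x in s, ENNReal.ofReal (H x) ∂μ ≠ ⊤ ∧
        ∫⁻ x in s, ENNReal.ofReal (-H x) ∂μ ≠ ⊤) := by
    intro s hs hsf
    have hfi := (hint s hs hsf).hasFiniteIntegral
    rw [hasFiniteIntegral_iff_norm] at hfi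
    constructor
    · refine ne_top_of_le_ne_top hfi.ne (lintegral_mono fun x => ?_)
      exact ENNReal.ofReal_le_ofReal (by rw [Real.norm_eq_abs]; exact le_abs_self _)
    · refine ne_top_of_le_ne_top hfi.ne (lintegral_mono fun x => ?_)
      exact ENNReal.ofReal_le_ofReal (by rw [Real.norm_eq_abs]; exact neg_le_abs _)
  set μp := μ.withDensity (fun x => ENNReal.ofReal (H x)) with hμp
  set μm := μ.withDensity (fun x => ENNReal.ofReal (-H x)) with hμm
  have hboxmeas : ∀ s ∈ boxes σ n, MeasurableSet s ∧ μ s < ⊤ := by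
    rintro _ ⟨A, hA, hAf, rfl⟩
    refine ⟨MeasurableSet.univ_pi fun i => hA i, ?_⟩
    rw [hμ]
    show Measure.pi (fun _ => σ) _ < ⊤
    rw [Measure.pi_pi]
    exact ENNReal.prod_lt_top fun i _ => hAf i
  have hext : μp = μm := by
    refine Measure.ext_of_generateFrom_of_iUnion (boxes σ n)
      (fun k => Set.pi univ (fun _ => spanningSets σ k)) (generateFrom_boxes n)
      (isPiSystem_boxes n) (iUnion_spanning_boxes n)
      (fun k => ⟨fun _ => spanningSets σ k, fun _ => measurableSet_spanningSets σ k,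
        fun _ => measure_spanningSets_lt_top σ k, rfl⟩) ?_ ?_
    · intro k
      obtain ⟨hs, hsf⟩ := hboxmeas _ ⟨fun _ => spanningSets σ k,
        fun _ => measurableSet_spanningSets σ k,
        fun _ => measure_spanningSets_lt_top σ k, rfl⟩
      rw [hμp, withDensity_apply _ hs]
      exact (hfin _ hs hsf).1
    · rintro s hsbox
      obtain ⟨hs, hsf⟩ := hboxmeas s hsbox
      obtain ⟨A, hA, hAf, rfl⟩ := hsbox
      have h0 := hb A hA hAf
      have hI := hint _ hs hsf
      rw [show ∫ x in Set.pi univ A, h x ∂μ = ∫ x, H x ∂(μ.restrict (Set.pi univ A)) from rfl,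
        integral_eq_lintegral_pos_part_sub_lintegral_neg_part hI, sub_eq_zero] at h0
      obtain ⟨hf1, hf2⟩ := hfin _ hs hsf
      rw [hμp, hμm, withDensity_apply _ hs, withDensity_apply _ hs]
      exact (ENNReal.toReal_eq_toReal_iff' hf1 hf2).mp h0
  have hside : ∀ (G : (Fin n → T) → ℝ), Measurable G →
      μ.withDensity (fun x => ENNReal.ofReal (G x)) =
        μ.withDensity (fun x => ENNReal.ofReal (-G x)) →
      μ {x | 0 < G x} = 0 := by
    intro G hG hGext
    have : {x | 0 < G x} = ⋃ k, ({x | 0 < G x} ∩ Set.pi univ (fun _ => spanningSets σ k)) := by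
      rw [← Set.inter_iUnion, iUnion_spanning_boxes n, Set.inter_univ]
    rw [this]
    refine measure_iUnion_null fun k => ?_
    set s := {x | 0 < G x} ∩ Set.pi univ (fun _ : Fin n => spanningSets σ k) with hsdef
    have hsm : MeasurableSet s :=
      (measurableSet_lt measurable_const hG).inter
        (MeasurableSet.univ_pi fun _ => measurableSet_spanningSets σ k)
    have hm0 : μ.withDensity (fun x => ENNReal.ofReal (-G x)) s = 0 := by
      rw [withDensity_apply _ hsm]
      have : ∀ᵐ x ∂(μ.restrict s), ENNReal.ofReal (-G x) = 0 := by
        rw [ae_restrict_iff' hsm]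
        refine Filter.Eventually.of_forall fun x hx => ?_
        have : 0 < G x := hx.1
        simp [ENNReal.ofReal_eq_zero]
        linarith
      rw [lintegral_congr_ae this, lintegral_zero]
    have hp0 : μ.withDensity (fun x => ENNReal.ofReal (G x)) s = 0 := by
      rw [hGext]; exact hm0
    rw [withDensity_apply _ hsm] at hp0
    have := (lintegral_eq_zero_iff' (hG.ennreal_ofReal.aemeasurable)).mp hp0
    rw [Filter.EventuallyEq, ae_restrict_iff' hsm] at this
    rw [← le_zero_iff]
    calc μ s ≤ μ {x | ¬ (x ∈ s → ENNReal.ofReal (G x) = (fun _ => (0:ℝ≥0∞)) x)} := by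
          refine measure_mono fun x hx => ?_
          simp only [Set.mem_setOf_eq, Classical.not_imp]
          exact ⟨hx, by simp [ENNReal.ofReal_eq_zero]; exact hx.1⟩
      _ = 0 := this
  have hneg : μ {x | 0 < -H x} = 0 := by
    refine hside (fun x => -H x) Hm.neg ?_
    simp only [neg_neg]
    exact hext.symm
  have hpos : μ {x | 0 < H x} = 0 := hside H Hm hext
  have hae : H =ᵐ[μ] 0 := by
    rw [Filter.EventuallyEq, ae_iff]
    refine measure_mono_null (fun x hx => ?_) (measure_union_null hpos hneg)
    simp only [Set.mem_setOf_eq, Pi.zero_apply] at hx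
    rcases lt_or_gt_of_ne hx with hlt | hgt
    · exact Or.inr (by simpa using hlt)
    · exact Or.inl hgt
  exact Lp.ext (hae.trans (Lp.coeFn_zero ℝ 2 μ).symm)

/-- A closed submodule of `L²(T^{n+1})` containing all tensors `f ⊗ g` is everything. -/
lemma key (n : ℕ) (M : Submodule ℝ (FockComp σ (n + 1)))
    (hMc : IsClosed (M : Set (FockComp σ (n + 1))))
    (hM : ∀ (f : Lp ℝ 2 σ) (g : FockComp σ n), tens f g ∈ M) : M = ⊤ := by
  have htc : M.topologicalClosure = M :=
    le_antisymm (Submodule.topologicalClosure_minimal M le_rfl hMc)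
      (Submodule.le_topologicalClosure M)
  rw [← htc, Submodule.topologicalClosure_eq_top_iff, Submodule.eq_bot_iff]
  intro h hh
  refine eq_zero_of_forall_box (n + 1) h ?_
  intro A hA hAf
  set B : Set (Fin n → T) := Set.pi univ (fun j => A j.succ) with hBdef
  have hBm : MeasurableSet B := MeasurableSet.univ_pi fun j => hA j.succ
  have hBf : fockMeas σ n B ≠ ⊤ := by
    rw [hBdef]
    show Measure.pi (fun _ => σ) _ ≠ ⊤
    rw [Measure.pi_pi]
    exact (ENNReal.prod_lt_top fun i _ => hAf i.succ).ne
  set f : Lp ℝ 2 σ := indicatorConstLp 2 (hA 0) (hAf 0).ne (1 : ℝ) with hfdef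
  set g : FockComp σ n := indicatorConstLp 2 hBm hBf (1 : ℝ) with hgdef
  have hwm : tens f g ∈ M := hM f g
  have hinner : inner (𝕜 := ℝ) (tens f g) h = 0 :=
    (Submodule.mem_orthogonal M h).mp hh _ hwm
  have hboxm : MeasurableSet (Set.pi univ A) := MeasurableSet.univ_pi fun i => hA i
  have hw : ⇑(tens f g) =ᵐ[fockMeas σ (n + 1)]
      Set.indicator (Set.pi univ A) (fun _ => (1 : ℝ)) := by
    refine (tens_coeFn f g).trans ?_
    refine (tensFun_congr (indicatorConstLp_coeFn (p := 2)) (indicatorConstLp_coeFn (p := 2))).trans ?_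
    refine Filter.Eventually.of_forall fun x => ?_
    by_cases hx : x ∈ Set.pi univ A
    · rw [Set.indicator_of_mem hx]
      have h0 : x 0 ∈ A 0 := hx 0 (Set.mem_univ 0)
      have ht : (fun j => x j.succ) ∈ B := fun j _ => hx j.succ (Set.mem_univ _)
      rw [tensFun, Set.indicator_of_mem h0, Set.indicator_of_mem ht, one_mul]
    · rw [Set.indicator_of_notMem hx]
      rw [Set.mem_univ_pi] at hx
      push_neg at hx
      obtain ⟨i, hi⟩ := hx
      rcases Fin.eq_zero_or_eq_succ i with hi0 | ⟨j, rfl⟩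
      · subst hi0
        rw [tensFun, Set.indicator_of_notMem hi, zero_mul]
      · have : (fun j => x j.succ) ∉ B := fun hmem => hi (hmem j (Set.mem_univ j))
        rw [tensFun, Set.indicator_of_notMem this, mul_zero]
  rw [L2.inner_def] at hinner
  have hcongr : (fun a => inner (𝕜 := ℝ) ((tens f g) a) (h a))
      =ᵐ[fockMeas σ (n + 1)] Set.indicator (Set.pi univ A) (fun a => h a) := by
    filter_upwards [hw] with a ha
    rw [RCLike.inner_apply, conj_trivial, ha]
    by_cases hx : a ∈ Set.pi univ A
    · rw [Set.indicator_of_mem hx, Set.indicator_of_mem hx, mul_one]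
    · rw [Set.indicator_of_notMem hx, Set.indicator_of_notMem hx, mul_zero]
  rw [integral_congr_ae hcongr, integral_indicator hboxm] at hinner
  exact hinner

end Boxes

section Single

variable [SigmaFinite σ]

lemma lp_single_add (k : ℕ) (a b : FockComp σ k) :
    (lp.single 2 k (a + b) : Fock σ) = lp.single 2 k a + lp.single 2 k b := by
  apply lp.ext
  funext j
  rw [lp.coeFn_add, Pi.add_apply]
  by_cases hj : j = k
  · subst hj
    rw [lp.single_apply_self, lp.single_apply_self, lp.single_apply_self]
  · rw [lp.single_apply_ne _ _ _ hj, lp.single_apply_ne _ _ _ hj,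
      lp.single_apply_ne _ _ _ hj, add_zero]

lemma norm_lp_single (k : ℕ) (a : FockComp σ k) :
    ‖(lp.single 2 k a : Fock σ)‖ = ‖a‖ := by
  have h := lp.norm_single (p := 2) (E := fun m => FockComp σ m)
    (by norm_num) k a
  exact h

/-- `lp.single` as a continuous linear map. -/
noncomputable def singleCLM (k : ℕ) : FockComp σ k →L[ℝ] Fock σ :=
  LinearMap.mkContinuous
    { toFun := fun a => lp.single 2 k a
      map_add' := lp_single_add k
      map_smul' := fun c a => by simp [lp.single_smul] }
    1 (fun a => by rw [one_mul]; exact (norm_lp_single k a).le)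

lemma singleCLM_apply (k : ℕ) (a : FockComp σ k) :
    singleCLM k a = (lp.single 2 k a : Fock σ) := rfl

lemma single_zero_eq_smul (g : FockComp σ 0) :
    (lp.single 2 0 g : Fock σ) = (g (fun i => i.elim0)) • fockVacuum σ := by
  rw [fockVacuum, ← lp.single_smul]
  refine congrArg _ ?_
  apply Lp.ext
  filter_upwards [Lp.coeFn_smul (g (fun i => i.elim0))
      (indicatorConstLp 2 MeasurableSet.univ
        (by simp [fockMeas, Measure.pi_empty_univ]) (1 : ℝ)),
    indicatorConstLp_coeFn (p := 2) (μ := fockMeas σ 0)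
      (hs := MeasurableSet.univ)
      (hμs := by simp [fockMeas, Measure.pi_empty_univ]) (c := (1 : ℝ))] with xx h1 h2
  rw [h1, Pi.smul_apply, h2, Set.indicator_of_mem (Set.mem_univ xx), smul_eq_mul, mul_one]
  exact congrArg _ (Subsingleton.elim _ _)

end Single

end Stmt11Aux

/-- **Cyclicity of the vacuum for the free Gauss–Poisson field.** If each `x(f)`
(`f` continuous with compact support) has the prescribed creation/neutral/annihilation
action, then the closed linear span of `Ω` together with all vectors
`x(f₁)⋯x(fₙ)Ω` is the whole Fock space. -/
theorem stmt11
    {T : Type*} [TopologicalSpace T] [LocallyCompactSpace T]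
    [SecondCountableTopology T] [T2Space T]
    [MeasurableSpace T] [BorelSpace T]
    (σ : Measure T) [σ.Regular]
    (lam : T → ℝ) (hlam : Continuous lam)
    (x : (T → ℝ) → (Fock σ →L[ℝ] Fock σ))
    (hx : ∀ f : T → ℝ, Continuous f → HasCompactSupport f → IsGPField σ lam f (x f)) :
    (Submodule.span ℝ
      ({fockVacuum σ} ∪
        {v : Fock σ | ∃ (n : ℕ) (fs : Fin (n + 1) → T → ℝ),
          (∀ i, Continuous (fs i) ∧ HasCompactSupport (fs i)) ∧
          v = ((List.ofFn fun i => x (fs i)).prod) (fockVacuum σ)})).topologicalClosure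
      = ⊤ := by
  classical
  haveI : SigmaFinite σ := inferInstance
  set S : Set (Fock σ) :=
    {fockVacuum σ} ∪
      {v : Fock σ | ∃ (n : ℕ) (fs : Fin (n + 1) → T → ℝ),
        (∀ i, Continuous (fs i) ∧ HasCompactSupport (fs i)) ∧
        v = ((List.ofFn fun i => x (fs i)).prod) (fockVacuum σ)} with hSdef
  set M : Submodule ℝ (Fock σ) := (Submodule.span ℝ S).topologicalClosure with hMdef
  have hMcl : IsClosed (M : Set (Fock σ)) := Submodule.isClosed_topologicalClosure _
  have hvac : fockVacuum σ ∈ M :=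
    Submodule.le_topologicalClosure _ (Submodule.subset_span (Or.inl rfl))
  have hinv : ∀ f : T → ℝ, Continuous f → HasCompactSupport f → ∀ v ∈ M, x f v ∈ M := by
    intro f hfc hfs v hv
    have hgen : ∀ w ∈ S, x f w ∈ S := by
      intro w hw
      rcases hw with hw | ⟨n, fs, hfs', rfl⟩
      · rw [Set.mem_singleton_iff] at hw; subst hw
        refine Or.inr ⟨0, fun _ => f, fun i => ⟨hfc, hfs⟩, ?_⟩
        simp [List.ofFn_succ]
      · refine Or.inr ⟨n + 1, Fin.cons f fs, ?_, ?_⟩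
        · intro i
          induction i using Fin.cases with
          | zero => simpa using ⟨hfc, hfs⟩
          | succ j => simpa using hfs' j
        · have hlist : (List.ofFn fun i : Fin (n + 2) => x ((Fin.cons f fs : Fin (n + 2) → T → ℝ) i))
              = x f :: List.ofFn fun i : Fin (n + 1) => x (fs i) := by
            rw [List.ofFn_succ]
            simp
          rw [hlist, List.prod_cons, ContinuousLinearMap.mul_apply]
    have hspan : ∀ w ∈ Submodule.span ℝ S, x f w ∈ Submodule.span ℝ S := by
      intro w hw
      induction hw using Submodule.span_induction with
      | mem w hw => exact Submodule.subset_span (hgen w hw)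
      | zero => rw [map_zero]; exact Submodule.zero_mem _
      | add a b _ _ iha ihb => rw [map_add]; exact Submodule.add_mem _ iha ihb
      | smul c a _ iha => rw [(x f).map_smul]; exact Submodule.smul_mem _ _ iha
    have hv' : v ∈ closure (Submodule.span ℝ S : Set (Fock σ)) := hv
    have h1 : x f v ∈ closure ((x f) '' (Submodule.span ℝ S : Set (Fock σ))) :=
      image_closure_subset_closure_image (x f).continuous (Set.mem_image_of_mem _ hv')
    have h2 : ((x f) '' (Submodule.span ℝ S : Set (Fock σ)))
        ⊆ (Submodule.span ℝ S : Set (Fock σ)) := by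
      rintro _ ⟨w, hw, rfl⟩
      exact hspan w hw
    exact closure_mono h2 h1
  have hstep : ∀ (m : ℕ), (∀ j, j ≤ m → ∀ g : FockComp σ j, (lp.single 2 j g : Fock σ) ∈ M) →
      ∀ (f : T → ℝ), Continuous f → HasCompactSupport f → ∀ (hm : MemLp f 2 σ),
      ∀ g : FockComp σ m, (lp.single 2 (m + 1) (Stmt11Aux.tens (hm.toLp f) g) : Fock σ) ∈ M := by
    intro m hIH f hfc hfs hm g
    match m, hIH, g with
    | 0, hIH, g =>
      obtain ⟨f1, hf1, heq⟩ := (hx f hfc hfs).1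
      set c : ℝ := g (fun i => i.elim0) with hc
      have h1 : Stmt11Aux.tens (hm.toLp f) g = c • f1 := by
        apply Lp.ext
        have e1 : ⇑(Stmt11Aux.tens (hm.toLp f) g) =ᵐ[fockMeas σ 1]
            Stmt11Aux.tensFun f (⇑g) :=
          (Stmt11Aux.tens_coeFn _ _).trans
            (Stmt11Aux.tensFun_congr (hm.coeFn_toLp) Filter.EventuallyEq.rfl)
        have e2 : Stmt11Aux.tensFun f (⇑g) = fun x' : Fin 1 → T => c * f (x' 0) := by
          funext x'
          have hgc : (⇑g) (fun j : Fin 0 => x' j.succ) = c :=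
            congrArg _ (Subsingleton.elim _ _)
          simp only [Stmt11Aux.tensFun]
          rw [hgc, mul_comm]
        have e3 : ⇑(c • f1) =ᵐ[fockMeas σ 1] fun x' : Fin 1 → T => c * f (x' 0) := by
          refine (Lp.coeFn_smul c f1).trans ?_
          filter_upwards [hf1] with y hy
          rw [Pi.smul_apply, hy, smul_eq_mul]
        refine (e1.trans ?_).trans e3.symm
        rw [e2]
      rw [h1, lp.single_smul]
      refine Submodule.smul_mem _ _ ?_
      rw [← heq]
      exact hinv f hfc hfs _ hvac
    | (m' + 1), hIH, g =>
      obtain ⟨gp, g0, ga, hgp, hg0, hga, heq⟩ := (hx f hfc hfs).2 m' g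
      have h1 : Stmt11Aux.tens (hm.toLp f) g = gp :=
        Lp.ext ((Stmt11Aux.tens_coeFn _ _).trans
          ((Stmt11Aux.tensFun_congr hm.coeFn_toLp Filter.EventuallyEq.rfl).trans hgp.symm))
      rw [h1]
      have h2 : (lp.single 2 (m' + 2) gp : Fock σ)
          = x f (lp.single 2 (m' + 1) g) - lp.single 2 (m' + 1) g0 - lp.single 2 m' ga := by
        rw [heq]; abel
      rw [h2]
      exact Submodule.sub_mem _ (Submodule.sub_mem _
        (hinv f hfc hfs _ (hIH (m' + 1) le_rfl g))
        (hIH (m' + 1) le_rfl g0)) (hIH m' (Nat.le_succ m') ga)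
  have hsingle : ∀ k (g : FockComp σ k), (lp.single 2 k g : Fock σ) ∈ M := by
    intro k
    induction k using Nat.strong_induction_on with
    | _ k ih =>
      match k, ih with
      | 0, _ =>
        intro g
        rw [Stmt11Aux.single_zero_eq_smul g]
        exact Submodule.smul_mem _ _ hvac
      | (m + 1), ih =>
        intro g
        set N : Submodule ℝ (FockComp σ (m + 1)) :=
          Submodule.comap (Stmt11Aux.singleCLM (σ := σ) (m + 1)).toLinearMap M with hNdef
        have hNc : IsClosed (N : Set (FockComp σ (m + 1))) := by
          have he : (N : Set (FockComp σ (m + 1)))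
              = (Stmt11Aux.singleCLM (σ := σ) (m + 1)) ⁻¹' (M : Set (Fock σ)) := rfl
          rw [he]
          exact hMcl.preimage (Stmt11Aux.singleCLM (m + 1)).continuous
        have hNtop : N = ⊤ := by
          refine Stmt11Aux.key m N hNc ?_
          intro F g'
          have hmem : Stmt11Aux.tens F g' ∈ closure (N : Set (FockComp σ (m + 1))) := by
            rw [Metric.mem_closure_iff]
            intro ε hε
            have hg1 : (0 : ℝ) < ‖g'‖ + 1 := by positivity
            set ε' : ℝ := ε / (‖g'‖ + 1) with hε'
            have hε'pos : 0 < ε' := div_pos hε hg1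
            obtain ⟨fc, hfc_supp, hfc_close, hfc_cont, hfc_mem⟩ :=
              (Lp.memLp F).exists_hasCompactSupport_eLpNorm_sub_le ENNReal.ofNat_ne_top
                (ε := ENNReal.ofReal ε') (by simp [ENNReal.ofReal_eq_zero]; linarith)
            refine ⟨Stmt11Aux.tens (hfc_mem.toLp fc) g', ?_, ?_⟩
            · exact hstep m (fun j hj g'' => ih j (Nat.lt_succ_of_le hj) g'')
                fc hfc_cont hfc_supp hfc_mem g'
            · rw [dist_eq_norm, ← Stmt11Aux.tens_sub, Stmt11Aux.norm_tens]
              have hFnorm : ‖F - hfc_mem.toLp fc‖ ≤ ε' := by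
                rw [Lp.norm_def]
                have he : eLpNorm (⇑(F - hfc_mem.toLp fc)) 2 σ = eLpNorm (⇑F - fc) 2 σ := by
                  apply eLpNorm_congr_ae
                  filter_upwards [Lp.coeFn_sub F (hfc_mem.toLp fc), hfc_mem.coeFn_toLp]
                    with y h1 h2
                  rw [h1, Pi.sub_apply, Pi.sub_apply, h2]
                rw [he]
                exact ENNReal.toReal_le_of_le_ofReal hε'pos.le hfc_close
              calc ‖F - hfc_mem.toLp fc‖ * ‖g'‖ ≤ ε' * ‖g'‖ :=
                    mul_le_mul_of_nonneg_right hFnorm (norm_nonneg _)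
                _ < ε' * (‖g'‖ + 1) := by nlinarith
                _ = ε := by rw [hε']; field_simp
          rwa [hNc.closure_eq] at hmem
        have hgN : g ∈ N := by rw [hNtop]; exact Submodule.mem_top
        exact hgN
  rw [Submodule.eq_top_iff']
  intro v
  have hsum := lp.hasSum_single (E := fun k : ℕ => FockComp σ k) (p := 2) ENNReal.ofNat_ne_top v
  exact hMcl.mem_of_tendsto hsum (Filter.Eventually.of_forall fun s =>
    Submodule.sum_mem M fun i _ => hsingle i (v i))
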